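/- For every m ∈ ℕ, the ℝ-vector space H_m of weighted homogeneous Δ_H-harmonic polynomials of degree m on the first Heisenberg group is finite-dimensional of dimension m + 1. -/

import Mathlib

open MvPolynomial

noncomputable section

/-- The polynomial ring ℝ[x,y,t], with x = X 0, y = X 1, t = X 2. -/
abbrev R3 := MvPolynomial (Fin 3) ℝ

/-- The weights w(x) = w(y) = 1, w(t) = 2. -/
def w3 : Fin 3 → ℤ := ![1, 1, 2]

/-- The horizontal vector field X p = ∂ₓ p + 2 y ∂ₜ p. -/
def Xop : R3 →ₗ[ℝ] R3 :=
  (pderiv (0 : Fin 3)).toLinearMap +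
    (LinearMap.mulLeft ℝ ((2 : R3) * X 1)) ∘ₗ (pderiv (2 : Fin 3)).toLinearMap

/-- The horizontal vector field Y p = ∂_y p − 2 x ∂ₜ p. -/
def Yop : R3 →ₗ[ℝ] R3 :=
  (pderiv (1 : Fin 3)).toLinearMap -
    (LinearMap.mulLeft ℝ ((2 : R3) * X 0)) ∘ₗ (pderiv (2 : Fin 3)).toLinearMap

/-- The Heisenberg sub-Laplacian Δ_H = X² + Y². -/
def ΔH : R3 →ₗ[ℝ] R3 := Xop ∘ₗ Xop + Yop ∘ₗ Yop

/-- P_m : weighted homogeneous polynomials of degree m (ℤ-indexed, so P_m = 0 for m < 0). -/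
def Pm (m : ℤ) : Submodule ℝ R3 := weightedHomogeneousSubmodule ℝ w3 m

/-- H_m : weighted homogeneous Δ_H-harmonic polynomials of degree m. -/
def Hm (m : ℤ) : Submodule ℝ R3 := Pm m ⊓ LinearMap.ker ΔH

/-- The polynomial gauge η₊² = x² + y² + 4t. -/
def etaSq : R3 := X 0 ^ 2 + X 1 ^ 2 + 4 * X 2
def e3 (a b c : ℕ) : Fin 3 →₀ ℕ :=
  Finsupp.single 0 a + Finsupp.single 1 b + Finsupp.single 2 c

def M3 (a b c : ℕ) : R3 := monomial (e3 a b c) 1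

lemma weight_single' (i : Fin 3) (n : ℕ) :
    (Finsupp.weight w3) (Finsupp.single i n) = (n : ℤ) * w3 i := by
  rw [Finsupp.weight, LinearMap.toAddMonoidHom_coe, Finsupp.linearCombination_single]
  simp [zsmul_eq_mul]

lemma weight_e3 (a b c : ℕ) : (Finsupp.weight w3) (e3 a b c) = (a : ℤ) + b + 2 * c := by
  simp only [e3, map_add, weight_single']
  simp [w3]; ring

lemma e3_eq_self (d : Fin 3 →₀ ℕ) : e3 (d 0) (d 1) (d 2) = d := by
  ext i; fin_cases i <;> simp [e3] <;> omega

lemma pd0_M3 (a b c : ℕ) : pderiv 0 (M3 a b c) = (a : ℝ) • M3 (a-1) b c := by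
  have h : e3 a b c - Finsupp.single 0 1 = e3 (a-1) b c := by
    ext i; fin_cases i <;> simp [e3] <;> omega
  have h0 : e3 a b c 0 = a := by simp [e3]
  rw [M3, pderiv_monomial, h, h0, M3, smul_monomial, smul_eq_mul, mul_one, one_mul]

lemma pd1_M3 (a b c : ℕ) : pderiv 1 (M3 a b c) = (b : ℝ) • M3 a (b-1) c := by
  have h : e3 a b c - Finsupp.single 1 1 = e3 a (b-1) c := by
    ext i; fin_cases i <;> simp [e3] <;> omega
  have h0 : e3 a b c 1 = b := by simp [e3]
  rw [M3, pderiv_monomial, h, h0, M3, smul_monomial, smul_eq_mul, mul_one, one_mul]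

lemma pd2_M3 (a b c : ℕ) : pderiv 2 (M3 a b c) = (c : ℝ) • M3 a b (c-1) := by
  have h : e3 a b c - Finsupp.single 2 1 = e3 a b (c-1) := by
    ext i; fin_cases i <;> simp [e3] <;> omega
  have h0 : e3 a b c 2 = c := by simp [e3]
  rw [M3, pderiv_monomial, h, h0, M3, smul_monomial, smul_eq_mul, mul_one, one_mul]

lemma mulX0_M3 (a b c : ℕ) : X 0 * M3 a b c = M3 (a+1) b c := by
  have h : Finsupp.single 0 1 + e3 a b c = e3 (a+1) b c := by
    ext i; fin_cases i <;> simp [e3] <;> omega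
  rw [M3, X, monomial_mul, one_mul, h, M3]

lemma mulX1_M3 (a b c : ℕ) : X 1 * M3 a b c = M3 a (b+1) c := by
  have h : Finsupp.single 1 1 + e3 a b c = e3 a (b+1) c := by
    ext i; fin_cases i <;> simp [e3] <;> omega
  rw [M3, X, monomial_mul, one_mul, h, M3]


lemma Xop_M3 (a b c : ℕ) :
    Xop (M3 a b c) = (a : ℝ) • M3 (a-1) b c + (2*c : ℝ) • M3 a (b+1) (c-1) := by
  simp only [Xop, LinearMap.add_apply, LinearMap.coe_comp, Function.comp_apply,
    Derivation.coeFn_coe, LinearMap.mulLeft_apply, pd0_M3, pd2_M3]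
  have h2 : ∀ q : R3, (2 : R3) * q = (2 : ℝ) • q := fun q => by
    rw [show (2 : R3) = C (2 : ℝ) from (map_ofNat C 2).symm, C_mul']
  rw [mul_smul_comm, mul_assoc, mulX1_M3, h2, smul_smul, mul_comm (c:ℝ) 2]

lemma Yop_M3 (a b c : ℕ) :
    Yop (M3 a b c) = (b : ℝ) • M3 a (b-1) c - (2*c : ℝ) • M3 (a+1) b (c-1) := by
  have h2 : ∀ q : R3, (2 : R3) * q = (2 : ℝ) • q := fun q => by
    rw [show (2 : R3) = C (2 : ℝ) from (map_ofNat C 2).symm, C_mul']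
  simp only [Yop, LinearMap.sub_apply, LinearMap.coe_comp, Function.comp_apply,
    Derivation.coeFn_coe, LinearMap.mulLeft_apply, pd1_M3, pd2_M3]
  rw [mul_smul_comm, mul_assoc, mulX0_M3, h2, smul_smul, mul_comm (c:ℝ) 2]

set_option maxRecDepth 10000 in
lemma key (a b c : ℕ) :
    ΔH (M3 (a+2) b c) =
      ((((a:ℕ)+2 : ℕ) : ℝ) * (((a+1 : ℕ)) : ℝ)) • M3 a b c
      + ((b:ℝ) * ((b-1 : ℕ) : ℝ)) • M3 (a+2) (b-2) c
      + (4*(c:ℝ)*(((a+2 : ℕ)) : ℝ)) • M3 (a+1) (b+1) (c-1)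
      - (4*(c:ℝ)*(b:ℝ)) • M3 (a+3) (b-1) (c-1)
      + (4*(c:ℝ)*((c-1:ℕ):ℝ)) • M3 (a+4) b (c-2)
      + (4*(c:ℝ)*((c-1:ℕ):ℝ)) • M3 (a+2) (b+2) (c-2) := by
  simp only [ΔH, LinearMap.add_apply, LinearMap.coe_comp, Function.comp_apply]
  rw [Xop_M3, Yop_M3]
  simp only [map_add, map_sub, map_smul]
  rw [Xop_M3, Xop_M3, Yop_M3, Yop_M3]
  rw [show a+2-1-1 = a from rfl, show a+2-1 = a+1 from rfl, show b+1+1 = b+2 from rfl,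
    show c-1-1 = c-2 from rfl, show b-1-1 = b-2 from rfl, show a+2+1+1 = a+4 from rfl,
    show a+2+1 = a+3 from rfl]
  module


def S3 (n : ℤ) : Set (Fin 3 →₀ ℕ) := {d | Finsupp.weight w3 d = n}

lemma mem_S3_iff (d : Fin 3 →₀ ℕ) (n : ℤ) :
    d ∈ S3 n ↔ (d 0 : ℤ) + (d 1) + 2 * (d 2) = n := by
  have h := weight_e3 (d 0) (d 1) (d 2)
  rw [e3_eq_self] at h
  rw [S3, Set.mem_setOf_eq, h]

lemma M3_mem (a b c : ℕ) : M3 a b c ∈ Pm ((a:ℤ) + b + 2*c) :=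
  isWeightedHomogeneous_monomial _ _ _ (weight_e3 a b c)

lemma M3_mem' {a b c : ℕ} {n : ℤ} (h : (a:ℤ) + b + 2*c = n) : M3 a b c ∈ Pm n :=
  h ▸ M3_mem a b c

lemma Pm_span (n : ℤ) :
    Pm n = Submodule.span ℝ ((fun d => (monomial d 1 : R3)) '' S3 n) := by
  rw [Pm, weightedHomogeneousSubmodule_eq_finsupp_supported,
    AddMonoidAlgebra.supported_eq_span_single]
  congr 1

lemma mapsTo_of_mono (T : R3 →ₗ[ℝ] R3) (k j : ℤ)
    (h : ∀ a b c : ℕ, (a:ℤ) + b + 2*c = k → T (M3 a b c) ∈ Pm j) :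
    ∀ p ∈ Pm k, T p ∈ Pm j := by
  have hle : Pm k ≤ Submodule.comap T (Pm j) := by
    rw [Pm_span]
    refine Submodule.span_le.2 ?_
    rintro q ⟨d, hd, rfl⟩
    rw [mem_S3_iff] at hd
    have : (monomial d 1 : R3) = M3 (d 0) (d 1) (d 2) := by rw [M3, e3_eq_self]
    simp only [SetLike.mem_coe, Submodule.mem_comap]
    rw [this]
    exact h _ _ _ hd
  exact fun p hp => hle hp

lemma Xop_mem {k : ℤ} {p : R3} (hp : p ∈ Pm k) : Xop p ∈ Pm (k - 1) := by
  refine mapsTo_of_mono Xop k (k-1) (fun a b c hk => ?_) p hp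
  rw [Xop_M3]
  refine Submodule.add_mem _ ?_ ?_
  · rcases Nat.eq_zero_or_pos a with ha | ha
    · simp [ha]
    · exact Submodule.smul_mem _ _ (M3_mem' (by omega))
  · rcases Nat.eq_zero_or_pos c with hc | hc
    · simp [hc]
    · exact Submodule.smul_mem _ _ (M3_mem' (by omega))

lemma Yop_mem {k : ℤ} {p : R3} (hp : p ∈ Pm k) : Yop p ∈ Pm (k - 1) := by
  refine mapsTo_of_mono Yop k (k-1) (fun a b c hk => ?_) p hp
  rw [Yop_M3]
  refine Submodule.sub_mem _ ?_ ?_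
  · rcases Nat.eq_zero_or_pos b with hb | hb
    · simp [hb]
    · exact Submodule.smul_mem _ _ (M3_mem' (by omega))
  · rcases Nat.eq_zero_or_pos c with hc | hc
    · simp [hc]
    · exact Submodule.smul_mem _ _ (M3_mem' (by omega))

lemma ΔH_mem {k : ℤ} {p : R3} (hp : p ∈ Pm k) : ΔH p ∈ Pm (k - 2) := by
  have h2 : k - 1 - 1 = k - 2 := by ring
  rw [ΔH]
  simp only [LinearMap.add_apply, LinearMap.coe_comp, Function.comp_apply]
  exact Submodule.add_mem _ (h2 ▸ Xop_mem (Xop_mem hp)) (h2 ▸ Yop_mem (Yop_mem hp))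

lemma aux_smul (r : ℝ) (a b c : ℕ) (n : ℤ)
    (h : r ≠ 0 → ∃ p ∈ Pm n, ΔH p = M3 a b c) :
    ∃ p ∈ Pm n, ΔH p = r • M3 a b c := by
  by_cases hr : r = 0
  · exact ⟨0, Submodule.zero_mem _, by simp [hr]⟩
  · obtain ⟨p, hp, hΔ⟩ := h hr
    exact ⟨r • p, Submodule.smul_mem _ _ hp, by rw [map_smul, hΔ]⟩

lemma mono_surj : ∀ N : ℕ, ∀ a b c : ℕ, 2*c + b ≤ N →
    ∃ p ∈ Pm ((a:ℤ) + b + 2*c + 2), ΔH p = M3 a b c := by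
  intro N
  induction N using Nat.strong_induction_on with
  | _ N IH =>
  intro a b c hN
  have step : ∀ a' b' c' : ℕ, 2*c' + b' < 2*c + b →
      ((a':ℤ) + b' + 2*c' + 2 = (a:ℤ) + b + 2*c + 2) →
      ∃ p ∈ Pm ((a:ℤ) + b + 2*c + 2), ΔH p = M3 a' b' c' := by
    intro a' b' c' hlt hdeg
    obtain ⟨p, hp, hΔ⟩ := IH (2*c' + b') (by omega) a' b' c' le_rfl
    exact ⟨p, hdeg ▸ hp, hΔ⟩
  obtain ⟨q2, hq2, hΔ2⟩ := aux_smul ((b:ℝ) * ((b-1:ℕ):ℝ)) (a+2) (b-2) c _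
    (fun hr => by
      have hb : 2 ≤ b := by
        rcases b with _ | _ | b
        · simp at hr
        · norm_num at hr
        · omega
      exact step (a+2) (b-2) c (by omega) (by omega))
  obtain ⟨q3, hq3, hΔ3⟩ := aux_smul (4*(c:ℝ)*((a+2:ℕ):ℝ)) (a+1) (b+1) (c-1) _
    (fun hr => by
      have hc : 1 ≤ c := by
        rcases c with _ | c
        · norm_num at hr
        · omega
      exact step (a+1) (b+1) (c-1) (by omega) (by omega))
  obtain ⟨q4, hq4, hΔ4⟩ := aux_smul (4*(c:ℝ)*(b:ℝ)) (a+3) (b-1) (c-1) _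
    (fun hr => by
      have hc : 1 ≤ c ∧ 1 ≤ b := by
        constructor
        · rcases c with _ | c
          · norm_num at hr
          · omega
        · rcases b with _ | b
          · norm_num at hr
          · omega
      exact step (a+3) (b-1) (c-1) (by omega) (by omega))
  obtain ⟨q5, hq5, hΔ5⟩ := aux_smul (4*(c:ℝ)*((c-1:ℕ):ℝ)) (a+4) b (c-2) _
    (fun hr => by
      have hc : 2 ≤ c := by
        rcases c with _ | _ | c
        · norm_num at hr
        · norm_num at hr
        · omega
      exact step (a+4) b (c-2) (by omega) (by omega))
  obtain ⟨q6, hq6, hΔ6⟩ := aux_smul (4*(c:ℝ)*((c-1:ℕ):ℝ)) (a+2) (b+2) (c-2) _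
    (fun hr => by
      have hc : 2 ≤ c := by
        rcases c with _ | _ | c
        · norm_num at hr
        · norm_num at hr
        · omega
      exact step (a+2) (b+2) (c-2) (by omega) (by omega))
  have hK : (((a+2:ℕ)):ℝ) * ((a+1:ℕ):ℝ) ≠ 0 := by positivity
  refine ⟨(((a+2:ℕ):ℝ) * ((a+1:ℕ):ℝ))⁻¹ • (M3 (a+2) b c - q2 - q3 + q4 - q5 - q6),
    ?_, ?_⟩
  · refine Submodule.smul_mem _ _ ?_
    refine Submodule.sub_mem _ (Submodule.sub_mem _ (Submodule.add_mem _
      (Submodule.sub_mem _ (Submodule.sub_mem _ ?_ hq2) hq3) hq4) hq5) hq6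
    exact M3_mem' (by push_cast; ring)
  · rw [map_smul, map_sub, map_sub, map_add, map_sub, map_sub,
      hΔ2, hΔ3, hΔ4, hΔ5, hΔ6, key, inv_smul_eq_iff₀ hK]
    module

lemma S3_finite (n : ℤ) : (S3 n).Finite := by
  have hsub : S3 n ⊆ Set.Icc (0 : Fin 3 →₀ ℕ) (e3 n.toNat n.toNat n.toNat) := by
    intro d hd
    rw [mem_S3_iff] at hd
    refine ⟨zero_le, ?_⟩
    rw [Finsupp.le_iff]
    intro i _
    fin_cases i <;> simp [e3] <;> omega
  exact (Set.finite_Icc _ _).subset hsub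

def PmEquiv (n : ℤ) : Pm n ≃ₗ[ℝ] (S3 n →₀ ℝ) :=
  (LinearEquiv.ofEq _ _ (by
      rw [Pm]
      exact weightedHomogeneousSubmodule_eq_finsupp_supported ℝ w3 n)).trans
    (AddMonoidAlgebra.supportedEquivFinsupp (S3 n))

instance PmFD (n : ℤ) : FiniteDimensional ℝ (Pm n) := by
  haveI := (S3_finite n).fintype
  exact LinearEquiv.finiteDimensional (PmEquiv n).symm

lemma finrank_Pm (n : ℤ) : Module.finrank ℝ (Pm n) = Nat.card (S3 n) := by
  haveI := (S3_finite n).fintype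
  rw [LinearEquiv.finrank_eq (PmEquiv n), Module.finrank_finsupp_self,
    Nat.card_eq_fintype_card]

def cardEquiv (m : ℕ) : S3 (m:ℤ) ≃ (S3 ((m:ℤ)-2)) ⊕ (Fin (m+1)) where
  toFun d :=
    if h : d.1 2 = 0 then
      Sum.inr ⟨d.1 0, by
        have hd := (mem_S3_iff _ _).1 d.2
        omega⟩
    else
      Sum.inl ⟨d.1 - Finsupp.single 2 1, by
        have hd := (mem_S3_iff _ _).1 d.2
        rw [mem_S3_iff]
        have h0 : ∀ i : Fin 3, (d.1 - Finsupp.single 2 1 : Fin 3 →₀ ℕ) i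
            = d.1 i - (Finsupp.single 2 1 : Fin 3 →₀ ℕ) i := fun i => Finsupp.tsub_apply _ _ _
        rw [h0, h0, h0, Finsupp.single_eq_of_ne (by decide), Finsupp.single_eq_of_ne (by decide),
          Finsupp.single_eq_same]
        omega⟩
  invFun s :=
    match s with
    | Sum.inl e => ⟨e.1 + Finsupp.single 2 1, by
        have he := (mem_S3_iff _ _).1 e.2
        rw [mem_S3_iff]
        rw [Finsupp.add_apply, Finsupp.add_apply, Finsupp.add_apply,
          Finsupp.single_eq_of_ne (by decide), Finsupp.single_eq_of_ne (by decide),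
          Finsupp.single_eq_same]
        omega⟩
    | Sum.inr k => ⟨e3 k (m - k) 0, by
        rw [mem_S3_iff]
        have hk := k.2
        simp [e3]
        omega⟩
  left_inv d := by
    by_cases h : d.1 2 = 0
    · simp only [h, dif_pos]
      apply Subtype.ext
      have hd := (mem_S3_iff _ _).1 d.2
      ext i
      fin_cases i <;> simp [e3] <;> omega
    · simp only [h, dif_neg, not_false_iff]
      apply Subtype.ext
      ext i
      fin_cases i <;> simp [Finsupp.tsub_apply] <;> omega
  right_inv s := by
    match s with
    | Sum.inl e =>
      have h2 : (e.1 + Finsupp.single 2 1 : Fin 3 →₀ ℕ) 2 = e.1 2 + 1 := by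
        rw [Finsupp.add_apply, Finsupp.single_eq_same]
      simp only [h2]
      rw [dif_neg (by omega)]
      congr 1
      apply Subtype.ext
      ext i
      fin_cases i <;> simp [Finsupp.tsub_apply]
    | Sum.inr k =>
      have h2 : (e3 (k:ℕ) (m - k) 0) 2 = 0 := by simp [e3]
      simp only [h2]
      rw [dif_pos trivial]
      congr 1
      apply Fin.ext
      simp [e3]

lemma card_rec (m : ℕ) : Nat.card (S3 (m:ℤ)) = Nat.card (S3 ((m:ℤ)-2)) + (m+1) := by
  haveI := (S3_finite (m:ℤ)).fintype
  haveI := (S3_finite ((m:ℤ)-2)).fintype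
  rw [Nat.card_congr (cardEquiv m), Nat.card_sum]
  simp


lemma key_surj (m : ℕ) : ∀ q ∈ Pm ((m:ℤ)-2), ∃ p ∈ Pm (m:ℤ), ΔH p = q := by
  intro q hq
  rw [Pm_span] at hq
  refine Submodule.span_induction ?_ ?_ ?_ ?_ hq
  · rintro x ⟨d, hd, rfl⟩
    rw [mem_S3_iff] at hd
    obtain ⟨p, hp, hΔ⟩ := mono_surj (2*(d 2) + (d 1)) (d 0) (d 1) (d 2) le_rfl
    refine ⟨p, ?_, ?_⟩
    · have : ((d 0 : ℤ) + (d 1) + 2*(d 2) + 2) = (m:ℤ) := by omega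
      exact this ▸ hp
    · rw [hΔ, M3, e3_eq_self]
  · exact ⟨0, Submodule.zero_mem _, map_zero _⟩
  · rintro x y hx hy ⟨p, hp, hΔp⟩ ⟨p', hp', hΔp'⟩
    exact ⟨p + p', Submodule.add_mem _ hp hp', by rw [map_add, hΔp, hΔp']⟩
  · rintro r x hx ⟨p, hp, hΔp⟩
    exact ⟨r • p, Submodule.smul_mem _ _ hp, by rw [map_smul, hΔp]⟩


set_option synthInstance.maxHeartbeats 1000000 in
set_option maxHeartbeats 2000000 in
/-- `H_m` is finite-dimensional of dimension `m + 1`. -/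
theorem stmt4 (m : ℕ) :
    FiniteDimensional ℝ (Hm (m : ℤ)) ∧ Module.finrank ℝ (Hm (m : ℤ)) = m + 1 := by
  have hrestr : ∀ p ∈ Pm (m:ℤ), ΔH p ∈ Pm ((m:ℤ)-2) := fun p hp => ΔH_mem hp
  set F : Pm (m:ℤ) →ₗ[ℝ] Pm ((m:ℤ)-2) := ΔH.restrict hrestr with hF
  have Fsurj : Function.Surjective F := by
    rintro ⟨q, hq⟩
    obtain ⟨p, hp, hΔ⟩ := key_surj m q hq
    exact ⟨⟨p, hp⟩, Subtype.ext hΔ⟩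
  have hker : LinearMap.ker F = Submodule.comap (Pm (m:ℤ)).subtype (Hm (m:ℤ)) := by
    rw [hF, LinearMap.ker_restrict]
    ext x
    simp only [Submodule.mem_comap, Hm, Submodule.mem_inf, Submodule.coe_subtype]
    exact ⟨fun h => ⟨x.2, h⟩, fun h => h.2⟩
  have e : (LinearMap.ker F) ≃ₗ[ℝ] Hm (m:ℤ) :=
    (LinearEquiv.ofEq _ _ hker).trans
      (Submodule.comapSubtypeEquivOfLe (inf_le_left : Hm (m:ℤ) ≤ Pm (m:ℤ)))
  haveI hfdker : FiniteDimensional ℝ (LinearMap.ker F) := inferInstance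
  have hfd : FiniteDimensional ℝ (Hm (m:ℤ)) := Module.Finite.equiv e
  refine ⟨hfd, ?_⟩
  have h1 := LinearMap.finrank_range_add_finrank_ker F
  rw [LinearMap.range_eq_top.2 Fsurj, finrank_top ℝ (Pm ((m:ℤ)-2))] at h1
  rw [finrank_Pm, finrank_Pm, card_rec m] at h1
  have h2 : Module.finrank ℝ (Hm (m:ℤ)) = Module.finrank ℝ (LinearMap.ker F) :=
    e.symm.finrank_eq
  rw [h2]
  omega

end
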